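/- Let u ∈ C̃²(T³) solve the reduced Calabi–Yau equation (u_xx + 1)(u_yy + u_tt + u_t + 1) − u_xy² − u_xt² = e^F with F continuous and 1-periodic. Then at every point of ℝ³, 0 < 2 e^{F/2} ≤ Δu + u_t + 2, where Δu = u_xx + u_yy + u_tt. -/

import Mathlib

open MeasureTheory

noncomputable section

/-- Points of `ℝ³`, written as `ℝ × ℝ × ℝ`. -/
abbrev R3 := ℝ × ℝ × ℝ

/-- The coordinate direction `x`. -/
def vx : R3 := (1, 0, 0)
/-- The coordinate direction `y`. -/
def vy : R3 := (0, 1, 0)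
/-- The coordinate direction `t`. -/
def vt : R3 := (0, 0, 1)

/-- Partial (directional) derivative in the direction `e`. -/
def pd (e : R3) (u : R3 → ℝ) : R3 → ℝ := fun p => fderiv ℝ u p e

/-- `1`-periodicity in each of the three variables. -/
def Periodic3 (u : R3 → ℝ) : Prop :=
  ∀ p : R3, u (p + vx) = u p ∧ u (p + vy) = u p ∧ u (p + vt) = u p

/-- The unit cube `[0,1]³`. -/
def cube : Set R3 := Set.Icc (0, 0, 0) (1, 1, 1)

/-- Zero mean over the unit cube. -/
def ZeroMean (u : R3 → ℝ) : Prop := ∫ p in cube, u p = 0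

/-- The reduced Calabi–Yau equation
`(u_xx + 1)(u_yy + u_tt + u_t + 1) − u_xy² − u_xt² = e^F` on `ℝ³`. -/
def CYeq (F u : R3 → ℝ) : Prop :=
  ∀ p : R3,
    (pd vx (pd vx u) p + 1)
        * (pd vy (pd vy u) p + pd vt (pd vt u) p + pd vt u p + 1)
      - (pd vy (pd vx u) p) ^ 2 - (pd vt (pd vx u) p) ^ 2 = Real.exp (F p)

/-- The Euclidean norm on `ℝ³ = ℝ × ℝ × ℝ`. -/
def enorm3 (h : R3) : ℝ := Real.sqrt (h.1 ^ 2 + h.2.1 ^ 2 + h.2.2 ^ 2)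

lemma pd_contDiff' {n : ℕ} (e : R3) {u : R3 → ℝ} (hu : ContDiff ℝ (n+1) u) :
    ContDiff ℝ n (pd e u) := by
  have h : ContDiff ℝ n (fderiv ℝ u) := hu.fderiv_right (by exact_mod_cast le_refl _)
  exact (ContinuousLinearMap.apply ℝ ℝ e).contDiff.comp h

lemma fderiv_periodic' {u : R3 → ℝ} (hu : Differentiable ℝ u) {v : R3}
    (h : ∀ p, u (p + v) = u p) (p : R3) : fderiv ℝ u (p + v) = fderiv ℝ u p := by
  have h1 : HasFDerivAt (fun q : R3 => q + v) (ContinuousLinearMap.id ℝ R3) p :=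
    (hasFDerivAt_id p).add_const v
  have h2 := (hu (p+v)).hasFDerivAt.comp p h1
  have h3 : (u ∘ fun q : R3 => q + v) = u := funext h
  rw [h3] at h2
  simpa using h2.fderiv.symm

lemma hasDerivAt_line' (v : R3 → ℝ) (hv : Differentiable ℝ v) (p w : R3) (s : ℝ) :
    HasDerivAt (fun s : ℝ => v (p + s • w)) (fderiv ℝ v (p + s • w) w) s := by
  have h1 : HasDerivAt (fun s : ℝ => p + s • w) w s := by
    simpa using ((hasDerivAt_id s).smul_const w).const_add p
  exact (hv _).hasFDerivAt.comp_hasDerivAt s h1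

/-- For a `C²` `1`-periodic zero-mean solution `u` of the reduced
Calabi–Yau equation, `0 < 2 e^(F/2) ≤ Δu + u_t + 2` everywhere. -/
theorem stmt1 (F u : R3 → ℝ) (hF : Continuous F) (hFper : Periodic3 F)
    (hu : ContDiff ℝ 2 u) (huper : Periodic3 u) (humean : ZeroMean u)
    (hsol : CYeq F u) :
    ∀ p : R3, 0 < 2 * Real.exp (F p / 2) ∧
      2 * Real.exp (F p / 2) ≤ pd vx (pd vx u) p + pd vy (pd vy u) p + pd vt (pd vt u) p + pd vt u p + 2 := by
  -- `u_x` is C¹, `u_xx` is continuous.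
  have hu2 : ContDiff ℝ (1+1) u := by exact_mod_cast hu
  have hux : ContDiff ℝ 1 (pd vx u) := pd_contDiff' vx hu2
  have hux01 : ContDiff ℝ (0+1) (pd vx u) := by exact_mod_cast hux
  have huxx : ContDiff ℝ 0 (pd vx (pd vx u)) := pd_contDiff' vx hux01
  have hA : Continuous fun p => pd vx (pd vx u) p + 1 :=
    (huxx.continuous).add continuous_const
  set A : R3 → ℝ := fun p => pd vx (pd vx u) p + 1 with hAdef
  set B : R3 → ℝ := fun p =>
    pd vy (pd vy u) p + pd vt (pd vt u) p + pd vt u p + 1 with hBdef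
  -- `A p * B p ≥ exp (F p) > 0`, so `A` never vanishes.
  have hprod : ∀ p : R3, Real.exp (F p) ≤ A p * B p := by
    intro p
    have := hsol p
    have h1 := sq_nonneg (pd vy (pd vx u) p)
    have h2 := sq_nonneg (pd vt (pd vx u) p)
    simp only [hAdef, hBdef]
    nlinarith
  have hAne : ∀ p : R3, A p ≠ 0 := by
    intro p hp
    have := hprod p
    rw [hp, zero_mul] at this
    exact absurd this (not_le.mpr (Real.exp_pos _))
  -- `u_x` is periodic in the `x` direction.
  have huxper : ∀ p : R3, pd vx u (p + vx) = pd vx u p := by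
    intro p
    have := fderiv_periodic' (hu.differentiable (by norm_num))
      (fun q => (huper q).1) p
    simp only [pd, this]
  -- Rolle: there is a point where `u_xx = 0`, hence `A = 1 > 0` there.
  obtain ⟨c, hc, hc0⟩ : ∃ c ∈ Set.Ioo (0:ℝ) 1,
      deriv (fun s : ℝ => pd vx u ((0:R3) + s • vx)) c = 0 := by
    apply exists_deriv_eq_zero (f := fun s : ℝ => pd vx u ((0:R3) + s • vx))
      (by norm_num)
    · exact ((hux.continuous).comp (by continuity)).continuousOn
    · simpa using (huxper 0).symm
  set q : R3 := (0:R3) + c • vx with hqdef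
  have hAq : A q = 1 := by
    have hd := hasDerivAt_line' (pd vx u) (hux.differentiable one_ne_zero) 0 vx c
    have : pd vx (pd vx u) q = 0 := by
      rw [hd.deriv] at hc0
      simpa [pd, hqdef] using hc0
    simp [hAdef, this]
  -- IVT: `A > 0` everywhere.
  have hApos : ∀ p : R3, 0 < A p := by
    intro p
    by_contra hle
    push_neg at hle
    have hlt : A p < 0 := lt_of_le_of_ne hle (hAne p)
    set h : ℝ → ℝ := fun s => A (q + s • (p - q)) with hhdef
    have hhc : Continuous h := hA.comp (by continuity)
    have h0 : h 0 = 1 := by simpa [hhdef] using hAq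
    have h1 : h 1 = A p := by simp [hhdef]
    have : (0:ℝ) ∈ Set.Icc (h 1) (h 0) := by
      constructor
      · rw [h1]; linarith
      · rw [h0]; norm_num
    have := intermediate_value_Icc' (by norm_num : (0:ℝ) ≤ 1) hhc.continuousOn this
    obtain ⟨s, _, hs⟩ := this
    exact hAne _ hs
  -- Conclude with AM–GM.
  have hABsum : ∀ p : R3, A p + B p = pd vx (pd vx u) p + pd vy (pd vy u) p
      + pd vt (pd vt u) p + pd vt u p + 2 := by
    intro p; simp only [hAdef, hBdef]; ring
  clear_value A B
  intro p
  have hexp : 0 < Real.exp (F p / 2) := Real.exp_pos _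
  refine ⟨by linarith, ?_⟩
  have ha : 0 < A p := hApos p
  have hab : Real.exp (F p) ≤ A p * B p := hprod p
  have hb : 0 < B p := by
    by_contra hb
    push_neg at hb
    nlinarith [Real.exp_pos (F p)]
  have hsa : Real.sqrt (A p) ^ 2 = A p := Real.sq_sqrt ha.le
  have hsb : Real.sqrt (B p) ^ 2 = B p := Real.sq_sqrt hb.le
  have hamgm : 2 * Real.sqrt (A p) * Real.sqrt (B p) ≤ A p + B p := by
    nlinarith [sq_nonneg (Real.sqrt (A p) - Real.sqrt (B p))]
  have hsqrt : Real.exp (F p / 2) ≤ Real.sqrt (A p) * Real.sqrt (B p) := by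
    rw [Real.exp_half, ← Real.sqrt_mul ha.le]
    exact Real.sqrt_le_sqrt hab
  have hgoal : 2 * Real.exp (F p / 2) ≤ A p + B p := by
    have h2 : 2 * (Real.sqrt (A p) * Real.sqrt (B p))
        = 2 * Real.sqrt (A p) * Real.sqrt (B p) := by ring
    nlinarith [hsqrt, hamgm, h2, hexp]
  linarith [hgoal, (hABsum p).ge, (hABsum p).le]

end
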